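/- Let G be a group of isometries of ℝ³, x ∈ ℝ³, and suppose the stabilizer G_x is infinite and the orbit S = G·x is discrete and contains a point x' ≠ x. Then there exist infinitely many distinct elements of G_x that also fix some point x'' ∈ S with x'' ≠ x; consequently all points of S lie on the line through x and x''. -/

import Mathlib

open Filter

noncomputable section

abbrev E3 := EuclideanSpace ℝ (Fin 3)

/-- A set with no accumulation points meets every compact set in a finite set. -/
lemma aux_finite_inter_compact {S K : Set E3} (hdisc : ∀ z : E3, ¬ AccPt z (𝓟 S))
    (hK : IsCompact K) : (S ∩ K).Finite := by
  by_contra h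
  have h' : (S ∩ K).Infinite := h
  obtain ⟨z, _, hz⟩ :=
    h'.exists_accPt_of_subset_isCompact hK Set.inter_subset_right
  exact hdisc z (hz.mono (principal_mono.2 Set.inter_subset_left))

/-- Pigeonhole: an infinite set mapped into a finite set has an infinite fiber. -/
lemma aux_infinite_fiber {α β : Type*} {s : Set α} (hs : s.Infinite) (f : α → β)
    {T : Set β} (hT : T.Finite) (hmap : ∀ a ∈ s, f a ∈ T) :
    ∃ b, {a ∈ s | f a = b}.Infinite := by
  by_contra h
  push_neg at h
  have : s ⊆ ⋃ b ∈ T, {a ∈ s | f a = b} := fun a ha =>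
    Set.mem_biUnion (hmap a ha) ⟨ha, rfl⟩
  exact hs ((hT.biUnion fun b _ => h b).subset this)

/-- Isometries of ℝ³ fixing three points in "general position" (a point `x` and
two points whose differences from `x` are linearly independent) form a finite set. -/
lemma aux_finite_fixing (x u v : E3) (huv : LinearIndependent ℝ ![u, v]) :
    {g : E3 ≃ᵢ E3 | g x = x ∧ g (x + u) = x + u ∧ g (x + v) = x + v}.Finite := by
  classical
  set K : Submodule ℝ E3 := Submodule.span ℝ {u, v} with hKdef
  have hcard : Module.finrank ℝ K = 2 := by
    have hr : Set.range ![u, v] = {u, v} := by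
      ext y; simp [Fin.exists_fin_two, or_comm]
    have := finrank_span_eq_card huv
    rw [hr] at this
    simpa using this
  have hdim : Module.finrank ℝ E3 = 3 := by simp [finrank_euclideanSpace]
  have hKorth : Module.finrank ℝ Kᗮ = 1 := by
    have := Submodule.finrank_add_finrank_orthogonal (K := K)
    omega
  -- pick a nonzero vector w in Kᗮ
  obtain ⟨w, hwK, hw0⟩ : ∃ w ∈ Kᗮ, w ≠ 0 := by
    by_contra h
    push_neg at h
    have : Kᗮ = ⊥ := by
      ext y; simp only [Submodule.mem_bot]
      constructor
      · intro hy; by_contra hy0; exact hy0 (h y hy)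
      · rintro rfl; exact Kᗮ.zero_mem
    rw [this] at hKorth
    simp at hKorth
  have hspanw : Submodule.span ℝ {w} = Kᗮ := by
    apply Submodule.eq_of_le_of_finrank_le
    · rw [Submodule.span_le, Set.singleton_subset_iff]; exact hwK
    · rw [hKorth, finrank_span_singleton hw0]
  -- span of u, v, w is everything
  have hspan_top : Submodule.span ℝ {u, v, w} = ⊤ := by
    have hsup : Submodule.span ℝ {u, v, w} = K ⊔ Submodule.span ℝ {w} := by
      rw [hKdef]
      have : ({u, v, w} : Set E3) = {u, v} ∪ {w} := by
        ext y
        simp only [Set.mem_insert_iff, Set.mem_union, Set.mem_singleton_iff]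
        tauto
      rw [this, Submodule.span_union]
    apply Submodule.eq_top_of_finrank_eq
    rw [hdim, hsup]
    have hdisj : K ⊓ Submodule.span ℝ {w} = ⊥ := by
      rw [hspanw]
      exact (Submodule.orthogonal_disjoint K).eq_bot
    have := Submodule.finrank_sup_add_finrank_inf_eq K (Submodule.span ℝ {w})
    rw [hdisj] at this
    simp only [finrank_bot] at this
    rw [hcard, finrank_span_singleton hw0] at this
    omega
  -- the linear part of a fixing isometry
  have key : ∀ g : E3 ≃ᵢ E3, g x = x → g (x + u) = x + u → g (x + v) = x + v →
      (g (x + w) = x + w ∨ g (x + w) = x + (-w)) := by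
    intro g hgx hgu hgv
    set c : E3 ≃ᵢ E3 :=
      (IsometryEquiv.addRight x).trans (g.trans (IsometryEquiv.addRight x).symm) with hc
    have hcy : ∀ y : E3, c y = g (y + x) - x := fun y => rfl
    have hc0 : c 0 = 0 := by rw [hcy, zero_add, hgx, sub_self]
    set L := c.toRealLinearIsometryEquivOfMapZero hc0 with hL
    have hLy : ∀ y : E3, L y = g (y + x) - x := by
      intro y
      rw [hL]
      rw [show ((c.toRealLinearIsometryEquivOfMapZero hc0) y) = c y from
        congrFun (c.coe_toRealLinearIsometryEquivOfMapZero hc0) y]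
      exact hcy y
    have hLu : L u = u := by rw [hLy, add_comm u x, hgu]; abel
    have hLv : L v = v := by rw [hLy, add_comm v x, hgv]; abel
    have hLK : ∀ p ∈ K, L p = p := by
      intro p hp
      induction hp using Submodule.span_induction with
      | mem y hy =>
        rcases hy with rfl | rfl
        · exact hLu
        · simpa using hLv
      | zero => simp
      | add a b _ _ ha hb => rw [map_add, ha, hb]
      | smul r a _ ha => rw [map_smul, ha]
    have hLw_orth : L w ∈ Kᗮ := by
      intro p hp
      have : inner ℝ (L p) (L w) = (inner ℝ p w : ℝ) := L.inner_map_map p w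
      rw [hLK p hp] at this
      rw [real_inner_comm]
      rw [real_inner_comm] at this
      rw [this]
      exact hwK p hp
    rw [← hspanw, Submodule.mem_span_singleton] at hLw_orth
    obtain ⟨a, ha⟩ := hLw_orth
    have hnorm : ‖L w‖ = ‖w‖ := L.norm_map w
    rw [← ha, norm_smul] at hnorm
    have ha1 : |a| = 1 := by
      have hwpos : (0:ℝ) < ‖w‖ := norm_pos_iff.mpr hw0
      have : |a| * ‖w‖ = 1 * ‖w‖ := by simpa [Real.norm_eq_abs] using hnorm
      exact mul_right_cancel₀ (ne_of_gt hwpos) this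
    have hgw : g (x + w) = x + L w := by
      rw [hLy, add_comm x w]; abel
    rcases abs_eq (by norm_num : (0:ℝ) ≤ 1) |>.mp ha1 with h1 | h1
    · left; rw [hgw, ← ha, h1, one_smul]
    · right; rw [hgw, ← ha, h1, neg_one_smul]
  -- injectivity on the set
  have hinj : Set.InjOn (fun g : E3 ≃ᵢ E3 => g (x + w))
      {g : E3 ≃ᵢ E3 | g x = x ∧ g (x + u) = x + u ∧ g (x + v) = x + v} := by
    rintro g ⟨hgx, hgu, hgv⟩ g' ⟨hgx', hgu', hgv'⟩ hgw
    simp only at hgw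
    -- both g and g' agree on x, x+u, x+v, x+w; show they agree everywhere
    -- via their linear parts
    have lin : ∀ (e : E3 ≃ᵢ E3), e x = x →
        ∃ L' : E3 ≃ₗᵢ[ℝ] E3, ∀ y : E3, e y = x + L' (y - x) := by
      intro e hex
      set c : E3 ≃ᵢ E3 :=
        (IsometryEquiv.addRight x).trans (e.trans (IsometryEquiv.addRight x).symm) with hc
      have hcy : ∀ y : E3, c y = e (y + x) - x := fun y => rfl
      have hc0 : c 0 = 0 := by rw [hcy, zero_add, hex, sub_self]
      refine ⟨c.toRealLinearIsometryEquivOfMapZero hc0, fun y => ?_⟩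
      rw [show ((c.toRealLinearIsometryEquivOfMapZero hc0) (y - x)) = c (y - x) from
        congrFun (c.coe_toRealLinearIsometryEquivOfMapZero hc0) (y - x), hcy,
        sub_add_cancel]
      abel
    obtain ⟨L, hLspec⟩ := lin g hgx
    obtain ⟨L', hLspec'⟩ := lin g' hgx'
    have agree_u : L u = L' u := by
      have h1 := hLspec (x + u); rw [hgu] at h1
      have h2 := hLspec' (x + u); rw [hgu'] at h2
      have h3 := add_left_cancel (h1.symm.trans h2)
      simpa using h3
    have agree_v : L v = L' v := by
      have h1 := hLspec (x + v); rw [hgv] at h1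
      have h2 := hLspec' (x + v); rw [hgv'] at h2
      have h3 := add_left_cancel (h1.symm.trans h2)
      simpa using h3
    have agree_w : L w = L' w := by
      have h1 := hLspec (x + w); rw [hgw] at h1
      have h2 := hLspec' (x + w)
      have h3 := add_left_cancel (h1.symm.trans h2)
      simpa using h3
    have hLeq : (L : E3 →ₗ[ℝ] E3) = (L' : E3 →ₗ[ℝ] E3) := by
      apply LinearMap.ext_on hspan_top
      intro y hy
      simp only [Set.mem_insert_iff, Set.mem_singleton_iff] at hy
      rcases hy with h | h | h
      · rw [h]; simpa using agree_u
      · rw [h]; simpa using agree_v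
      · rw [h]; simpa using agree_w
    apply IsometryEquiv.ext
    intro y
    rw [hLspec y, hLspec' y]
    congr 1
    exact congrFun (congrArg DFunLike.coe hLeq) (y - x)
  have himgfin : ((fun g : E3 ≃ᵢ E3 => g (x + w)) ''
      {g : E3 ≃ᵢ E3 | g x = x ∧ g (x + u) = x + u ∧ g (x + v) = x + v}).Finite := by
    apply Set.Finite.subset ((Set.finite_singleton (x + (-w))).insert (x + w))
    rintro _ ⟨g, ⟨hgx, hgu, hgv⟩, rfl⟩
    simp only [Set.mem_insert_iff, Set.mem_singleton_iff]
    exact key g hgx hgu hgv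
  exact Set.Finite.of_finite_image himgfin hinj

/-- If the stabilizer of `x` in a group `G` of isometries of ℝ³ is infinite, the
orbit `S = G·x` is discrete and contains a point `x' ≠ x`, then infinitely many
elements of the stabilizer of `x` also fix some `x'' ∈ S` with `x'' ≠ x`, and
consequently all points of `S` lie on the line through `x` and `x''`. -/
theorem stabilizer_fixes_second_point_and_collinear
    (G : Subgroup (E3 ≃ᵢ E3)) (x x' : E3)
    (S : Set E3) (hS : S = {y : E3 | ∃ g ∈ G, g x = y})
    (hstab : Set.Infinite {g : E3 ≃ᵢ E3 | g ∈ G ∧ g x = x})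
    (hdisc : ∀ z : E3, ¬ AccPt z (𝓟 S))
    (hx' : x' ∈ S) (hne : x' ≠ x) :
    ∃ x'' ∈ S, x'' ≠ x ∧
      Set.Infinite {g : E3 ≃ᵢ E3 | g ∈ G ∧ g x = x ∧ g x'' = x''} ∧
      ∀ z ∈ S, ∃ lam : ℝ, z = x + lam • (x'' - x) := by
  classical
  -- members of G map S into S when they fix nothing in particular
  have hmapS : ∀ g : E3 ≃ᵢ E3, g ∈ G → ∀ z ∈ S, g z ∈ S := by
    intro g hg z hz
    rw [hS] at hz ⊢
    obtain ⟨h, hh, rfl⟩ := hz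
    exact ⟨g * h, mul_mem hg hh, rfl⟩
  -- Step 1: find infinitely many elements of G fixing both x and x'
  set H0 := {g : E3 ≃ᵢ E3 | g ∈ G ∧ g x = x} with hH0
  have himg0 : ∀ g ∈ H0, g x' ∈ S ∩ Metric.sphere x (dist x' x) := by
    rintro g ⟨hgG, hgx⟩
    refine ⟨hmapS g hgG x' hx', ?_⟩
    rw [Metric.mem_sphere]
    calc dist (g x') x = dist (g x') (g x) := by rw [hgx]
    _ = dist x' x := g.isometry.dist_eq x' x
  have hfin0 : (S ∩ Metric.sphere x (dist x' x)).Finite :=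
    aux_finite_inter_compact hdisc (isCompact_sphere x _)
  obtain ⟨w0, hw0⟩ := aux_infinite_fiber hstab (fun g => g x') hfin0 himg0
  obtain ⟨g0, hg0⟩ := hw0.nonempty
  have hg0G : g0 ∈ G := hg0.1.1
  have hg0x : g0 x = x := hg0.1.2
  have hg0x' : g0 x' = w0 := hg0.2
  set H := {g : E3 ≃ᵢ E3 | g ∈ G ∧ g x = x ∧ g x' = x'} with hH
  have hHinf : H.Infinite := by
    have hinj : Set.InjOn (fun g => g0⁻¹ * g) {g ∈ H0 | g x' = w0} :=
      fun a _ b _ hab => by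
        simpa using congrArg (fun t => g0 * t) hab
    refine ((hw0.image hinj).mono ?_)
    rintro _ ⟨g, ⟨⟨hgG, hgx⟩, hgx'⟩, rfl⟩
    refine ⟨mul_mem (inv_mem hg0G) hgG, ?_, ?_⟩
    · show g0⁻¹ (g x) = x
      rw [hgx]
      show g0.symm x = x
      rw [IsometryEquiv.symm_apply_eq, hg0x]
    · show g0⁻¹ (g x') = x'
      rw [hgx']
      show g0.symm w0 = x'
      rw [IsometryEquiv.symm_apply_eq, hg0x']
  refine ⟨x', hx', hne, hHinf, ?_⟩
  -- Step 2: collinearity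
  intro z hz
  by_contra hlin
  push_neg at hlin
  -- z is not on the line through x and x', so x'-x and z-x are independent
  have huv : LinearIndependent ℝ ![x' - x, z - x] := by
    rw [LinearIndependent.pair_iff]
    intro s t hst
    by_cases ht : t = 0
    · subst ht
      refine ⟨?_, rfl⟩
      simp only [zero_smul, add_zero] at hst
      have : x' - x ≠ 0 := sub_ne_zero.mpr hne
      rcases smul_eq_zero.mp hst with h | h
      · exact h
      · exact absurd h this
    · exfalso
      apply hlin (-(s/t))
      have hv : z - x = (-(s/t)) • (x' - x) := by
        have h1 : t • (z - x) = -(s • (x' - x)) := by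
          rw [eq_neg_iff_add_eq_zero, add_comm]; exact hst
        have h2 := congrArg (fun y => (t⁻¹ : ℝ) • y) h1
        simp only [smul_smul, inv_mul_cancel₀ ht, one_smul, smul_neg] at h2
        rw [h2, ← neg_smul]
        congr 1
        rw [div_eq_inv_mul]
      rw [← hv]
      abel
  -- orbit of z under H lies in a finite set
  have himg : ∀ g ∈ H, g z ∈ S ∩ (Metric.sphere x (dist z x) ∩ Metric.sphere x' (dist z x')) := by
    rintro g ⟨hgG, hgx, hgx'⟩
    refine ⟨hmapS g hgG z hz, ?_, ?_⟩
    · rw [Metric.mem_sphere]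
      calc dist (g z) x = dist (g z) (g x) := by rw [hgx]
      _ = dist z x := g.isometry.dist_eq z x
    · rw [Metric.mem_sphere]
      calc dist (g z) x' = dist (g z) (g x') := by rw [hgx']
      _ = dist z x' := g.isometry.dist_eq z x'
  have hfin : (S ∩ (Metric.sphere x (dist z x) ∩ Metric.sphere x' (dist z x'))).Finite :=
    aux_finite_inter_compact hdisc
      ((isCompact_sphere x _).inter_right Metric.isClosed_sphere)
  obtain ⟨w1, hw1⟩ := aux_infinite_fiber hHinf (fun g => g z) hfin himg
  obtain ⟨g1, hg1⟩ := hw1.nonempty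
  have hg1G : g1 ∈ G := hg1.1.1
  have hg1x : g1 x = x := hg1.1.2.1
  have hg1x' : g1 x' = x' := hg1.1.2.2
  have hg1z : g1 z = w1 := hg1.2
  -- infinitely many isometries fix x, x', z: contradiction with finiteness
  have hFfin := aux_finite_fixing x (x' - x) (z - x) huv
  have hFinf : {g : E3 ≃ᵢ E3 | g x = x ∧ g (x + (x' - x)) = x + (x' - x) ∧
      g (x + (z - x)) = x + (z - x)}.Infinite := by
    have hinj : Set.InjOn (fun g => g1⁻¹ * g) {g ∈ H | g z = w1} :=
      fun a _ b _ hab => by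
        simpa using congrArg (fun t => g1 * t) hab
    refine ((hw1.image hinj).mono ?_)
    rintro _ ⟨g, ⟨⟨hgG, hgx, hgx'⟩, hgz⟩, rfl⟩
    have e1 : x + (x' - x) = x' := by abel
    have e2 : x + (z - x) = z := by abel
    rw [e1, e2]
    refine ⟨?_, ?_, ?_⟩
    · show g1⁻¹ (g x) = x
      rw [hgx]
      show g1.symm x = x
      rw [IsometryEquiv.symm_apply_eq, hg1x]
    · show g1⁻¹ (g x') = x'
      rw [hgx']
      show g1.symm x' = x'
      rw [IsometryEquiv.symm_apply_eq, hg1x']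
    · show g1⁻¹ (g z) = z
      rw [hgz]
      show g1.symm w1 = z
      rw [IsometryEquiv.symm_apply_eq, hg1z]
  exact hFinf hFfin
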